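/- For every countable group H, the set E_H = {G ∈ 𝒢 : there is an injective group homomorphism H → Ḡ} is an analytic subset of 𝒢 (a continuous image of a Borel subset of a Polish space); consequently E_H is either meager or comeager in 𝒢. -/

import Mathlib

open MeasureTheory Topology Set Filter

/-! ## General Baire-category machinery: analytic sets have the Baire property -/

section BPGeneral
variable {X : Type*} [TopologicalSpace X]

lemma isMeagre_iUnion' {ι : Sort*} [Countable ι] {f : ι → Set X} (h : ∀ i, IsMeagre (f i)) :
    IsMeagre (⋃ i, f i) := by
  rw [IsMeagre, Set.compl_iUnion]
  exact countable_iInter_mem.2 h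

lemma isMeagre_union' {s t : Set X} (hs : IsMeagre s) (ht : IsMeagre t) : IsMeagre (s ∪ t) := by
  rw [IsMeagre, Set.compl_union]; exact Filter.inter_mem hs ht

lemma diff_meagre_of_eventuallyEq {s t : Set X} (h : s =ᵇ t) : IsMeagre (s \ t) := by
  rw [Filter.eventuallyEq_set] at h
  rw [IsMeagre]
  exact Filter.mem_of_superset h fun x hx hxd => hxd.2 (hx.1 hxd.1)

lemma eq_of_mem_closure_nhds [T2Space X] {x z : X}
    (h : ∀ W : Set X, IsOpen W → z ∈ W → x ∈ closure W) : x = z := by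
  by_contra hne
  obtain ⟨O, W, hO, hW, hxO, hzW, hOW⟩ := t2_separation hne
  obtain ⟨y, hyO, hyW⟩ := (mem_closure_iff.1 (h W hW hzW)) O hO hxO
  exact Set.disjoint_left.1 hOW hyO hyW

variable [SecondCountableTopology X] [BaireSpace X]

lemma exists_baire_hull (E : Set X) :
    ∃ B : Set X, BaireMeasurableSet B ∧ E ⊆ B ∧ B ⊆ closure E ∧
      ∀ B' : Set X, BaireMeasurableSet B' → E ⊆ B' → IsMeagre (B \ B') := by
  classical
  obtain ⟨b, hbc, -, hbasis⟩ := TopologicalSpace.exists_countable_basis X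
  set C : Set (Set X) := {U ∈ b | IsMeagre (U ∩ E)} with hC
  set V : Set X := ⋃₀ C with hV
  haveI : Countable ↥C := (hbc.mono (Set.sep_subset _ _)).to_subtype
  have hVopen : IsOpen V := isOpen_sUnion fun U hU => hbasis.isOpen hU.1
  have hEV : IsMeagre (E ∩ V) := by
    have hsub : E ∩ V ⊆ ⋃ U : C, (U.1 ∩ E) := by
      rintro x ⟨hxE, U, hU, hxU⟩
      exact Set.mem_iUnion.2 ⟨⟨U, hU⟩, ⟨hxU, hxE⟩⟩
    exact (isMeagre_iUnion' fun U => U.2.2).mono hsub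
  refine ⟨Vᶜ ∪ (E ∩ V), (hVopen.baireMeasurableSet.compl).union hEV.baireMeasurableSet,
    fun x hx => ?_, ?_, ?_⟩
  · by_cases h : x ∈ V
    · exact Or.inr ⟨hx, h⟩
    · exact Or.inl h
  · rintro x (hx | hx)
    · by_contra hcl
      obtain ⟨U, hUb, hxU, hUsub⟩ :=
        hbasis.exists_subset_of_mem_open hcl isClosed_closure.isOpen_compl
      have hUE : U ∩ E = ∅ := by
        apply Set.eq_empty_of_forall_notMem
        rintro y ⟨hyU, hyE⟩
        exact hUsub hyU (subset_closure hyE)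
      have hUC : U ∈ C := ⟨hUb, by rw [hUE]; exact IsMeagre.empty⟩
      exact hx (Set.mem_sUnion.2 ⟨U, hUC, hxU⟩)
    · exact subset_closure hx.1
  · intro B' hB' hEB'
    have key : IsMeagre (Vᶜ \ B') := by
      by_contra hD
      obtain ⟨W, hWopen, hW⟩ := ((hVopen.baireMeasurableSet.compl).diff hB').residualEq_isOpen
      have hWD : IsMeagre (W \ (Vᶜ \ B')) := diff_meagre_of_eventuallyEq hW.symm
      have hDW : IsMeagre ((Vᶜ \ B') \ W) := diff_meagre_of_eventuallyEq hW
      have hWne : W.Nonempty := by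
        rcases Set.eq_empty_or_nonempty W with rfl | h
        · exact absurd (hDW.mono (by simp)) hD
        · exact h
      obtain ⟨U, hUb, hxU, hUsub⟩ :=
        hbasis.exists_subset_of_mem_open hWne.choose_spec hWopen
      have hUne : U.Nonempty := ⟨_, hxU⟩
      have hUC : U ∈ C := by
        refine ⟨hUb, hWD.mono ?_⟩
        rintro y ⟨hyU, hyE⟩
        exact ⟨hUsub hyU, fun hy => hy.2 (hEB' hyE)⟩
      have hUV : U ⊆ V := fun y hy => Set.mem_sUnion.2 ⟨U, hUC, hy⟩
      have hUsubm : U ⊆ W \ (Vᶜ \ B') := fun y hy =>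
        ⟨hUsub hy, fun hyD => hyD.1 (hUV hy)⟩
      exact not_isMeagre_of_isOpen (hbasis.isOpen hUb) hUne (hWD.mono hUsubm)
    have hsub : (Vᶜ ∪ (E ∩ V)) \ B' ⊆ (Vᶜ \ B') ∪ (E ∩ V) := by
      rintro x ⟨hx | hx, hxB⟩
      · exact Or.inl ⟨hx, hxB⟩
      · exact Or.inr hx
    exact (isMeagre_union' key hEV).mono hsub

variable [T2Space X]

theorem analyticSet_baireMeasurableSet {S : Set X} (hS : AnalyticSet S) :
    BaireMeasurableSet S := by
  classical
  rw [AnalyticSet] at hS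
  rcases hS with rfl | ⟨g, hg, rfl⟩
  · exact IsMeagre.empty.baireMeasurableSet
  choose hull hullBM hullSub hullCl hullMin using exists_baire_hull (X := X)
  set cyl : ℕ → (ℕ → ℕ) → Set (ℕ → ℕ) := fun n y => {f | ∀ i < n, f i = y i} with hcyl
  set A : ℕ → (ℕ → ℕ) → Set X := fun n y => g '' cyl n y with hA
  set B : ℕ → (ℕ → ℕ) → Set X := fun n y => ⋂ k : Fin (n+1), hull (A k.1 y) with hB
  have cyl_congr : ∀ {n : ℕ} {y y' : ℕ → ℕ}, (∀ i < n, y i = y' i) → cyl n y = cyl n y' := by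
    intro n y y' h
    ext f
    constructor <;> intro hf i hi
    · rw [hf i hi, h i hi]
    · rw [hf i hi, h i hi]
  have A_congr : ∀ {n : ℕ} {y y' : ℕ → ℕ}, (∀ i < n, y i = y' i) → A n y = A n y' := by
    intro n y y' h
    simp only [hA, cyl_congr h]
  have B_congr : ∀ {n : ℕ} {y y' : ℕ → ℕ}, (∀ i < n, y i = y' i) → B n y = B n y' := by
    intro n y y' h
    simp only [hB]
    exact Set.iInter_congr fun k =>
      congrArg hull (A_congr fun i hi => h i (lt_of_lt_of_le hi (Nat.lt_succ_iff.mp k.2)))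
  have hAB : ∀ n y, A n y ⊆ B n y := by
    intro n y
    refine Set.subset_iInter fun k => subset_trans ?_ (hullSub _)
    rintro x ⟨f, hf, rfl⟩
    exact ⟨f, fun i hi => hf i (lt_of_lt_of_le hi (Nat.lt_succ_iff.mp k.2)), rfl⟩
  have hBhull : ∀ n y, B n y ⊆ hull (A n y) := fun n y =>
    Set.iInter_subset (fun k : Fin (n+1) => hull (A k.1 y)) ⟨n, n.lt_succ_self⟩
  have hBmono : ∀ n y, B (n+1) y ⊆ B n y := by
    intro n y
    refine Set.subset_iInter fun k => ?_
    exact Set.iInter_subset (fun k : Fin (n+2) => hull (A k.1 y)) ⟨k.1, lt_trans k.2 (Nat.lt_succ_self _)⟩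
  have hBM : ∀ n y, BaireMeasurableSet (B n y) := fun n y =>
    BaireMeasurableSet.iInter fun k => hullBM _
  -- the meager error set
  set M : Set X := ⋃ p : (Σ n : ℕ, Fin n → ℕ),
      (B p.1 (fun i => if h : i < p.1 then p.2 ⟨i, h⟩ else 0) \
        ⋃ m : ℕ, B (p.1+1) (Function.update (fun i => if h : i < p.1 then p.2 ⟨i, h⟩ else 0) p.1 m))
    with hM
  have hMmeagre : IsMeagre M := by
    refine isMeagre_iUnion' fun p => ?_
    set y : ℕ → ℕ := fun i => if h : i < p.1 then p.2 ⟨i, h⟩ else 0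
    have hsub : A p.1 y ⊆ ⋃ m : ℕ, B (p.1+1) (Function.update y p.1 m) := by
      rintro x ⟨f, hf, rfl⟩
      refine Set.mem_iUnion.2 ⟨f p.1, hAB _ _ ⟨f, ?_, rfl⟩⟩
      intro i hi
      rcases Nat.lt_succ_iff_lt_or_eq.mp hi with hi' | rfl
      · rw [Function.update_of_ne (Nat.ne_of_lt hi') _ _, hf i hi']
      · rw [Function.update_self]
    have := hullMin (A p.1 y) _
      (BaireMeasurableSet.iUnion fun m => hBM _ _) hsub
    exact this.mono (by exact fun x hx => ⟨hBhull _ _ hx.1, hx.2⟩)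
  -- the starting point
  set y₀ : ℕ → ℕ := fun _ => 0 with hy₀
  have hA0 : A 0 y₀ = Set.range g := by
    simp only [hA, hcyl]
    rw [show {f : ℕ → ℕ | ∀ i < 0, f i = y₀ i} = Set.univ from
      Set.eq_univ_of_forall fun f i hi => absurd hi (Nat.not_lt_zero i)]
    exact Set.image_univ
  have hSB : Set.range g ⊆ B 0 y₀ := by rw [← hA0]; exact hAB 0 y₀
  -- the escape argument
  have escape : ∀ x, x ∈ B 0 y₀ → x ∉ M → x ∈ Set.range g := by
    intro x hx0 hxM
    -- build the sequence of approximations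
    have step : ∀ n (Y : ℕ → ℕ), x ∈ B n Y → ∃ m, x ∈ B (n+1) (Function.update Y n m) := by
      intro n Y hxB
      set p : Σ n : ℕ, Fin n → ℕ := ⟨n, fun i => Y i.1⟩
      set y : ℕ → ℕ := fun i => if h : i < n then Y i else 0 with hy
      have hyY : ∀ i < n, Y i = y i := fun i hi => by simp [hy, hi]
      have hxB' : x ∈ B n y := by rwa [B_congr hyY] at hxB
      have : x ∉ B p.1 (fun i => if h : i < p.1 then p.2 ⟨i, h⟩ else 0) \
          ⋃ m : ℕ, B (p.1+1) (Function.update (fun i => if h : i < p.1 then p.2 ⟨i, h⟩ else 0) p.1 m) :=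
        fun h => hxM (Set.mem_iUnion.2 ⟨p, h⟩)
      have hxU : x ∈ ⋃ m : ℕ, B (n+1) (Function.update y n m) := by
        by_contra hne
        exact this ⟨hxB', hne⟩
      obtain ⟨m, hm⟩ := Set.mem_iUnion.1 hxU
      refine ⟨m, ?_⟩
      rw [B_congr (y' := Function.update y n m) ?_]
      · exact hm
      · intro i hi
        rcases Nat.lt_succ_iff_lt_or_eq.mp hi with hi' | rfl
        · rw [Function.update_of_ne (Nat.ne_of_lt hi'), Function.update_of_ne (Nat.ne_of_lt hi'),
            hyY i hi']
        · rw [Function.update_self, Function.update_self]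
    -- iterate coherently
    let seq : (n : ℕ) → {Y : ℕ → ℕ // x ∈ B n Y} :=
      fun n => Nat.rec ⟨y₀, hx0⟩
        (fun n p => ⟨Function.update p.1 n (Classical.choose (step n p.1 p.2)),
          Classical.choose_spec (step n p.1 p.2)⟩) n
    set y : ℕ → ℕ := fun i => (seq (i+1)).1 i with hy
    have coh : ∀ n, ∀ i < n, (seq n).1 i = y i := by
      intro n
      induction n with
      | zero => intro i hi; exact absurd hi (Nat.not_lt_zero i)
      | succ n ih =>
        intro i hi
        rcases Nat.lt_succ_iff_lt_or_eq.mp hi with hi' | rfl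
        · have h1 : (seq (n+1)).1 i = (seq n).1 i :=
            Function.update_of_ne (Nat.ne_of_lt hi') _ _
          rw [h1, ih i hi']
        · rfl
    have hxBn : ∀ n, x ∈ B n y := fun n => by
      rw [← B_congr (coh n)]; exact (seq n).2
    have hxcl : ∀ n, x ∈ closure (A n y) := fun n => hullCl _ (hBhull n y (hxBn n))
    have hxy : x = g y := by
      apply eq_of_mem_closure_nhds
      intro W hW hgyW
      obtain ⟨I, u, hIu, hpi⟩ := isOpen_pi_iff.1 (hW.preimage hg) y hgyW
      set k := (I.sup id) + 1 with hk
      have hIk : ∀ i ∈ I, i < k := fun i hi => Nat.lt_succ_of_le (Finset.le_sup (f := id) hi)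
      have hsub : A k y ⊆ W := by
        rintro x' ⟨f, hf, rfl⟩
        have hfpi : f ∈ (I : Set ℕ).pi u := by
          intro i hi
          rw [hf i (hIk i hi)]
          exact (hIu i hi).2
        exact hpi hfpi
      exact closure_mono hsub (hxcl k)
    exact ⟨y, hxy.symm⟩
  have hBS : B 0 y₀ =ᵇ Set.range g := by
    rw [Filter.eventuallyEq_set]
    refine Filter.mem_of_superset hMmeagre fun x hx => ?_
    exact ⟨fun h => escape x h hx, fun h => hSB h⟩
  exact (hBM 0 y₀).congr hBS

end BPGeneral

/-! ## Pinned definitions -/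



/-- The set of group multiplication tables on `ℕ` with identity `0`. -/
def GroupTables : Set (ℕ × ℕ → ℕ) :=
  {m | (∀ a b c : ℕ, m (m (a, b), c) = m (a, m (b, c))) ∧
       (∀ a : ℕ, m (a, 0) = a) ∧
       (∀ a : ℕ, m (0, a) = a) ∧
       (∀ a : ℕ, ∃ b : ℕ, m (a, b) = 0 ∧ m (b, a) = 0)}

/-- The carrier of the group `Ḡ` associated to a table `G ∈ 𝒢` (a copy of `ℕ`). -/
def Carrier (_G : ↥GroupTables) : Type := ℕ

noncomputable instance instGroupCarrier (G : ↥GroupTables) : Group (Carrier G) where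
  mul a b := G.1 (a, b)
  one := (0 : ℕ)
  inv a := Classical.choose (G.2.2.2.2 a)
  mul_assoc a b c := G.2.1 a b c
  one_mul a := G.2.2.2.1 a
  mul_one a := G.2.2.1 a
  inv_mul_cancel a := (Classical.choose_spec (G.2.2.2.2 a)).2

/-- Inclusion of `ℕ` into the carrier of `Ḡ`. -/
def toC (G : ↥GroupTables) (n : ℕ) : Carrier G := n

/-- Projection of the carrier of `Ḡ` back to `ℕ`. -/
def fromC (G : ↥GroupTables) (x : Carrier G) : ℕ := x


section Nested
variable {α : Type*} [TopologicalSpace α]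

lemma isClopen_eval {F : α → ℕ} (hF : Continuous F) (n : ℕ) : IsClopen {x | F x = n} :=
  ⟨isClosed_eq hF continuous_const, (isOpen_discrete {n}).preimage hF⟩

lemma isClosed_nested2 (F F' : α → ℕ) (G G' : α → ℕ → ℕ)
    (hF : Continuous F) (hF' : Continuous F')
    (hG : ∀ n, Continuous (G · n)) (hG' : ∀ n, Continuous (G' · n)) :
    IsClosed {x | G x (F x) = G' x (F' x)} := by
  have heq : {x | G x (F x) = G' x (F' x)} =
      ⋂ u, ⋂ v, ({x | F x = u} ∩ {x | F' x = v})ᶜ ∪ {x | G x u = G' x v} := by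
    ext x
    simp only [Set.mem_iInter, Set.mem_setOf_eq, Set.mem_union, Set.mem_compl_iff,
      Set.mem_inter_iff]
    constructor
    · intro h u v
      by_cases h1 : F x = u
      · by_cases h2 : F' x = v
        · exact Or.inr (h1 ▸ h2 ▸ h)
        · exact Or.inl fun hc => h2 hc.2
      · exact Or.inl fun hc => h1 hc.1
    · intro h
      rcases h (F x) (F' x) with hc | hc
      · exact absurd ⟨rfl, rfl⟩ hc
      · exact hc
  rw [heq]
  refine isClosed_iInter fun u => isClosed_iInter fun v => IsClosed.union ?_ ?_
  · exact (((isClopen_eval hF u).2.inter (isClopen_eval hF' v).2)).isClosed_compl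
  · exact isClosed_eq (hG u) (hG' v)

lemma isClosed_nested2' (F F' Hc : α → ℕ) (K : α → ℕ → ℕ → ℕ)
    (hF : Continuous F) (hF' : Continuous F') (hH : Continuous Hc)
    (hK : ∀ u v, Continuous (fun x => K x u v)) :
    IsClosed {x | Hc x = K x (F x) (F' x)} := by
  have heq : {x | Hc x = K x (F x) (F' x)} =
      ⋂ u, ⋂ v, ({x | F x = u} ∩ {x | F' x = v})ᶜ ∪ {x | Hc x = K x u v} := by
    ext x
    simp only [Set.mem_iInter, Set.mem_setOf_eq, Set.mem_union, Set.mem_compl_iff,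
      Set.mem_inter_iff]
    constructor
    · intro h u v
      by_cases h1 : F x = u
      · by_cases h2 : F' x = v
        · exact Or.inr (h1 ▸ h2 ▸ h)
        · exact Or.inl fun hc => h2 hc.2
      · exact Or.inl fun hc => h1 hc.1
    · intro h
      rcases h (F x) (F' x) with hc | hc
      · exact absurd ⟨rfl, rfl⟩ hc
      · exact hc
  rw [heq]
  refine isClosed_iInter fun u => isClosed_iInter fun v => IsClosed.union ?_ ?_
  · exact (((isClopen_eval hF u).2.inter (isClopen_eval hF' v).2)).isClosed_compl
  · exact isClosed_eq hH (hK u v)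

end Nested

lemma GroupTables.inv_unique {m : ℕ × ℕ → ℕ} (hm : m ∈ GroupTables) {a b c : ℕ}
    (h1 : m (a, b) = 0) (h2 : m (c, a) = 0) : c = b := by
  obtain ⟨hassoc, hr, hl, -⟩ := hm
  have h := hassoc c a b
  rw [h2, h1, hl, hr] at h
  exact h.symm

noncomputable def tblInv (G : ↥GroupTables) : ℕ → ℕ := fun a => Classical.choose (G.2.2.2.2 a)

lemma tblInv_spec (G : ↥GroupTables) (a : ℕ) :
    G.1 (a, tblInv G a) = 0 ∧ G.1 (tblInv G a, a) = 0 := Classical.choose_spec (G.2.2.2.2 a)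

lemma tblInv_eq_iff (G : ↥GroupTables) (a b : ℕ) :
    tblInv G a = b ↔ G.1 (a, b) = 0 ∧ G.1 (b, a) = 0 := by
  constructor
  · rintro rfl; exact tblInv_spec G a
  · rintro ⟨h1, h2⟩
    exact GroupTables.inv_unique G.2 h1 (tblInv_spec G a).2

instance : PolishSpace ↥GroupTables := by
  let f : ↥GroupTables → (ℕ × ℕ → ℕ) × (ℕ → ℕ) := fun G => (G.1, tblInv G)
  have hcont : Continuous f := by
    refine Continuous.prodMk continuous_subtype_val (continuous_pi fun a => ?_)
    rw [continuous_discrete_rng]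
    intro b
    have heq : ((fun G => tblInv G a) ⁻¹' {b} : Set ↥GroupTables) =
        Subtype.val ⁻¹' {m : ℕ × ℕ → ℕ | m (a, b) = 0 ∧ m (b, a) = 0} := by
      ext G
      simp only [Set.mem_preimage, Set.mem_singleton_iff, Set.mem_setOf_eq]
      exact tblInv_eq_iff G a b
    rw [heq]
    refine IsOpen.preimage continuous_subtype_val ?_
    exact ((isClopen_eval (continuous_apply (a, b)) 0).2.inter
      (isClopen_eval (continuous_apply (b, a)) 0).2)
  have hemb : Topology.IsEmbedding f :=
    Topology.IsEmbedding.of_comp hcont continuous_fst Topology.IsEmbedding.subtypeVal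
  have hrange : Set.range f = {q : (ℕ × ℕ → ℕ) × (ℕ → ℕ) |
      (∀ a b c : ℕ, q.1 (q.1 (a, b), c) = q.1 (a, q.1 (b, c))) ∧
      (∀ a : ℕ, q.1 (a, 0) = a) ∧ (∀ a : ℕ, q.1 (0, a) = a) ∧
      (∀ a : ℕ, q.1 (a, q.2 a) = 0 ∧ q.1 (q.2 a, a) = 0)} := by
    ext q
    constructor
    · rintro ⟨G, rfl⟩
      exact ⟨G.2.1, G.2.2.1, G.2.2.2.1, fun a => tblInv_spec G a⟩
    · rintro ⟨h1, h2, h3, h4⟩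
      have hm : q.1 ∈ GroupTables := ⟨h1, h2, h3, fun a => ⟨q.2 a, h4 a⟩⟩
      refine ⟨⟨q.1, hm⟩, ?_⟩
      refine Prod.ext rfl (funext fun a => ?_)
      exact (tblInv_eq_iff ⟨q.1, hm⟩ a (q.2 a)).2 (h4 a)
  have hclosed : IsClosed (Set.range f) := by
    rw [hrange]
    have c1 : ∀ p : ℕ × ℕ, Continuous (fun q : (ℕ × ℕ → ℕ) × (ℕ → ℕ) => q.1 p) :=
      fun p => (continuous_apply p).comp continuous_fst
    have c2 : ∀ a : ℕ, Continuous (fun q : (ℕ × ℕ → ℕ) × (ℕ → ℕ) => q.2 a) :=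
      fun a => (continuous_apply a).comp continuous_snd
    have : {q : (ℕ × ℕ → ℕ) × (ℕ → ℕ) |
        (∀ a b c : ℕ, q.1 (q.1 (a, b), c) = q.1 (a, q.1 (b, c))) ∧
        (∀ a : ℕ, q.1 (a, 0) = a) ∧ (∀ a : ℕ, q.1 (0, a) = a) ∧
        (∀ a : ℕ, q.1 (a, q.2 a) = 0 ∧ q.1 (q.2 a, a) = 0)} =
        (⋂ a, ⋂ b, ⋂ c, {q | q.1 (q.1 (a, b), c) = q.1 (a, q.1 (b, c))}) ∩
        ((⋂ a, {q | q.1 (a, 0) = a}) ∩ ((⋂ a, {q | q.1 (0, a) = a}) ∩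
        ((⋂ a, {q | q.1 (a, q.2 a) = 0}) ∩ (⋂ a, {q | q.1 (q.2 a, a) = 0})))) := by
      ext q
      simp only [Set.mem_setOf_eq, Set.mem_inter_iff, Set.mem_iInter]
      constructor
      · rintro ⟨h1, h2, h3, h4⟩
        exact ⟨h1, h2, h3, fun a => (h4 a).1, fun a => (h4 a).2⟩
      · rintro ⟨h1, h2, h3, h4, h5⟩
        exact ⟨h1, h2, h3, fun a => ⟨h4 a, h5 a⟩⟩
    rw [this]
    refine IsClosed.inter ?_ (IsClosed.inter ?_ (IsClosed.inter ?_ (IsClosed.inter ?_ ?_)))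
    · refine isClosed_iInter fun a => isClosed_iInter fun b => isClosed_iInter fun c => ?_
      exact isClosed_nested2 (α := (ℕ × ℕ → ℕ) × (ℕ → ℕ)) (fun q => q.1 (a, b)) (fun q => q.1 (b, c))
        (fun q u => q.1 (u, c)) (fun q v => q.1 (a, v)) (c1 _) (c1 _)
        (fun u => c1 _) (fun v => c1 _)
    · exact isClosed_iInter fun a => isClosed_eq (c1 _) continuous_const
    · exact isClosed_iInter fun a => isClosed_eq (c1 _) continuous_const
    · refine isClosed_iInter fun a => ?_
      exact isClosed_nested2 (α := (ℕ × ℕ → ℕ) × (ℕ → ℕ)) (fun q => q.2 a) (fun _ => 0)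
        (fun q u => q.1 (a, u)) (fun _ _ => 0) (c2 _) continuous_const
        (fun u => c1 _) (fun v => continuous_const)
    · refine isClosed_iInter fun a => ?_
      exact isClosed_nested2 (α := (ℕ × ℕ → ℕ) × (ℕ → ℕ)) (fun q => q.2 a) (fun _ => 0)
        (fun q u => q.1 (u, a)) (fun _ _ => 0) (c2 _) continuous_const
        (fun u => c1 _) (fun v => continuous_const)
  exact (Topology.IsClosedEmbedding.mk hemb hclosed).polishSpace

instance (G : ↥GroupTables) : Countable (Carrier G) := inferInstanceAs (Countable ℕ)
instance (G : ↥GroupTables) : Infinite (Carrier G) := inferInstanceAs (Infinite ℕ)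

/-! ### The permutation action -/

def actm (σ : Equiv.Perm ℕ) (m : ℕ × ℕ → ℕ) : ℕ × ℕ → ℕ :=
  fun p => σ (m (σ.symm p.1, σ.symm p.2))

lemma actm_mem {σ : Equiv.Perm ℕ} (hσ : σ 0 = 0) {m : ℕ × ℕ → ℕ} (hm : m ∈ GroupTables) :
    actm σ m ∈ GroupTables := by
  obtain ⟨h1, h2, h3, h4⟩ := hm
  have hσ0 : σ.symm 0 = 0 := (Equiv.symm_apply_eq σ).mpr hσ.symm
  refine ⟨fun a b c => ?_, fun a => ?_, fun a => ?_, fun a => ?_⟩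
  · simp only [actm, Equiv.symm_apply_apply]
    rw [h1]
  · simp only [actm, hσ0, h2, Equiv.apply_symm_apply]
  · simp only [actm, hσ0, h3, Equiv.apply_symm_apply]
  · obtain ⟨b, hb1, hb2⟩ := h4 (σ.symm a)
    exact ⟨σ b, by simp only [actm, Equiv.symm_apply_apply, hb1, hσ],
      by simp only [actm, Equiv.symm_apply_apply, hb2, hσ]⟩

lemma actm_actm (σ : Equiv.Perm ℕ) (m : ℕ × ℕ → ℕ) : actm σ.symm (actm σ m) = m := by
  funext p
  simp [actm]

lemma actm_continuous (σ : Equiv.Perm ℕ) : Continuous (actm σ) :=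
  continuous_pi fun p =>
    (continuous_of_discreteTopology (f := fun n : ℕ => σ n)).comp
      (continuous_apply (σ.symm p.1, σ.symm p.2))

noncomputable def actHomeo (σ : Equiv.Perm ℕ) (hσ : σ 0 = 0) :
    ↥GroupTables ≃ₜ ↥GroupTables where
  toFun G := ⟨actm σ G.1, actm_mem hσ G.2⟩
  invFun G := ⟨actm σ.symm G.1, actm_mem ((Equiv.symm_apply_eq σ).mpr hσ.symm) G.2⟩
  left_inv G := Subtype.ext (actm_actm σ G.1)
  right_inv G := Subtype.ext (by simpa using actm_actm σ.symm G.1)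
  continuous_toFun := Continuous.subtype_mk ((actm_continuous σ).comp continuous_subtype_val) _
  continuous_invFun := Continuous.subtype_mk ((actm_continuous σ.symm).comp continuous_subtype_val) _

lemma mem_S_act {H : Type*} [Group H] {σ : Equiv.Perm ℕ} (hσ : σ 0 = 0) {G : ↥GroupTables}
    (h : ∃ f : H →* Carrier G, Function.Injective f) :
    ∃ f : H →* Carrier ((actHomeo σ hσ) G), Function.Injective f := by
  obtain ⟨f, hf⟩ := h
  refine ⟨MonoidHom.mk' (fun x => toC _ (σ (fromC G (f x)))) fun x y => ?_, fun x y hxy => ?_⟩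
  · show toC _ (σ (fromC G (f (x * y)))) =
      toC _ (actm σ G.1 (σ (fromC G (f x)), σ (fromC G (f y))))
    show toC _ (σ (fromC G (f (x * y)))) =
      toC _ (σ (G.1 (σ.symm (σ (fromC G (f x))), σ.symm (σ (fromC G (f y))))))
    rw [Equiv.symm_apply_apply, Equiv.symm_apply_apply, map_mul]
    rfl
  · exact hf (σ.injective hxy)

/-! ### Building tables from groups -/

def mOf {M : Type*} [Group M] (e : ℕ ≃ M) : ℕ × ℕ → ℕ := fun p => e.symm (e p.1 * e p.2)

lemma mOf_mem {M : Type*} [Group M] (e : ℕ ≃ M) (h0 : e 0 = 1) : mOf e ∈ GroupTables := by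
  refine ⟨fun a b c => ?_, fun a => ?_, fun a => ?_, fun a => ?_⟩
  · simp [mOf, mul_assoc]
  · simp [mOf, h0]
  · simp [mOf, h0]
  · refine ⟨e.symm (e a)⁻¹, ?_, ?_⟩
    · simp only [mOf, Equiv.apply_symm_apply, mul_inv_cancel, ← h0, Equiv.symm_apply_apply]
    · simp only [mOf, Equiv.apply_symm_apply, inv_mul_cancel, ← h0, Equiv.symm_apply_apply]

lemma exists_equiv_extend {M : Type*} [Countable M] [Infinite M] (s : Finset ℕ) (g : ℕ → M)
    (hg : Function.Injective g) : ∃ e : ℕ ≃ M, ∀ n ∈ s, e n = g n := by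
  classical
  set t : Finset M := s.image g with ht
  let e₁ : (↑s : Set ℕ) ≃ (↑t : Set M) :=
    Equiv.ofBijective (fun x => ⟨g x.1, Finset.mem_coe.2 (ht ▸ Finset.mem_image_of_mem g
      (Finset.mem_coe.1 x.2))⟩)
      ⟨fun a b h => Subtype.ext (hg (congrArg Subtype.val h)), by
        rintro ⟨y, hy⟩
        obtain ⟨x, hx, rfl⟩ := Finset.mem_image.1 (Finset.mem_coe.1 (ht ▸ hy))
        exact ⟨⟨x, hx⟩, rfl⟩⟩
  haveI : Infinite ↥(↑s : Set ℕ)ᶜ := Set.infinite_coe_iff.2 (s.finite_toSet.infinite_compl)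
  haveI : Infinite ↥(↑t : Set M)ᶜ := Set.infinite_coe_iff.2 (t.finite_toSet.infinite_compl)
  obtain ⟨d₁⟩ := nonempty_denumerable ↥(↑s : Set ℕ)ᶜ
  obtain ⟨d₂⟩ := nonempty_denumerable ↥(↑t : Set M)ᶜ
  let e₂ : ↥(↑s : Set ℕ)ᶜ ≃ ↥(↑t : Set M)ᶜ := (d₁.eqv _).trans (d₂.eqv _).symm
  refine ⟨(Equiv.Set.sumCompl (↑s : Set ℕ)).symm.trans
    ((e₁.sumCongr e₂).trans (Equiv.Set.sumCompl (↑t : Set M))), fun n hn => ?_⟩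
  rw [Equiv.trans_apply, Equiv.trans_apply,
    Equiv.Set.sumCompl_symm_apply_of_mem (Finset.mem_coe.2 hn)]
  simp only [Equiv.sumCongr_apply, Sum.map_inl, Equiv.Set.sumCompl_apply_inl]
  rfl

/-! ### Topological transitivity -/

lemma transitive_action {U V : Set ↥GroupTables} (hU : IsOpen U) (hV : IsOpen V)
    (hUne : U.Nonempty) (hVne : V.Nonempty) :
    ∃ (σ : Equiv.Perm ℕ) (hσ : σ 0 = 0), (((actHomeo σ hσ) '' U) ∩ V).Nonempty := by
  classical
  obtain ⟨G, hG⟩ := hUne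
  obtain ⟨G', hG'⟩ := hVne
  obtain ⟨U', hU'o, hU'e⟩ := isOpen_induced_iff.1 hU
  obtain ⟨V', hV'o, hV'e⟩ := isOpen_induced_iff.1 hV
  have hGU' : G.1 ∈ U' := by rw [← hU'e] at hG; exact hG
  have hGV' : G'.1 ∈ V' := by rw [← hV'e] at hG'; exact hG'
  obtain ⟨I, u, hIu, hpi⟩ := isOpen_pi_iff.1 hU'o G.1 hGU'
  obtain ⟨I', u', hIu', hpi'⟩ := isOpen_pi_iff.1 hV'o G'.1 hGV'
  have hcylU : ∀ K : ↥GroupTables, (∀ p ∈ I, K.1 p = G.1 p) → K ∈ U := by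
    intro K hK
    rw [← hU'e]
    refine hpi fun p hp => ?_
    rw [hK p hp]
    exact (hIu p hp).2
  have hcylV : ∀ K : ↥GroupTables, (∀ p ∈ I', K.1 p = G'.1 p) → K ∈ V := by
    intro K hK
    rw [← hV'e]
    refine hpi' fun p hp => ?_
    rw [hK p hp]
    exact (hIu' p hp).2
  set N : Finset ℕ := ((I.image Prod.fst ∪ I.image Prod.snd) ∪ I.image G.1) ∪ {0} with hN
  set N' : Finset ℕ := ((I'.image Prod.fst ∪ I'.image Prod.snd) ∪ I'.image G'.1) ∪ {0} with hN'
  let M := Carrier G × Carrier G'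
  let g₁ : ℕ → M := fun n => (toC G n, 1)
  let g₂ : ℕ → M := fun n => (1, toC G' n)
  have hg₁ : Function.Injective g₁ := fun a b h => congrArg Prod.fst h
  have hg₂ : Function.Injective g₂ := fun a b h => congrArg Prod.snd h
  obtain ⟨e, he⟩ := exists_equiv_extend N g₁ hg₁
  obtain ⟨e', he'⟩ := exists_equiv_extend N' g₂ hg₂
  have h0N : (0 : ℕ) ∈ N := by simp [hN]
  have h0N' : (0 : ℕ) ∈ N' := by simp [hN']
  have he0 : e 0 = 1 := by rw [he 0 h0N]; rfl
  have he'0 : e' 0 = 1 := by rw [he' 0 h0N']; rfl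
  set K : ↥GroupTables := ⟨mOf e, mOf_mem e he0⟩ with hKdef
  set K' : ↥GroupTables := ⟨mOf e', mOf_mem e' he'0⟩ with hK'def
  have hKU : K ∈ U := by
    refine hcylU K fun p hp => ?_
    have hp1 : p.1 ∈ N := by
      simp only [hN, Finset.mem_union]
      exact Or.inl (Or.inl (Or.inl (Finset.mem_image_of_mem Prod.fst hp)))
    have hp2 : p.2 ∈ N := by
      simp only [hN, Finset.mem_union]
      exact Or.inl (Or.inl (Or.inr (Finset.mem_image_of_mem Prod.snd hp)))
    have hp3 : G.1 p ∈ N := by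
      simp only [hN, Finset.mem_union]
      exact Or.inl (Or.inr (Finset.mem_image_of_mem G.1 hp))
    show e.symm (e p.1 * e p.2) = G.1 p
    rw [he p.1 hp1, he p.2 hp2]
    have : g₁ p.1 * g₁ p.2 = g₁ (G.1 p) := by
      show (toC G p.1 * toC G p.2, (1 : Carrier G') * 1) = (toC G (G.1 p), 1)
      rw [one_mul]
      exact congrArg (fun z => (z, (1 : Carrier G'))) rfl
    rw [this, ← he _ hp3, Equiv.symm_apply_apply]
  have hK'V : K' ∈ V := by
    refine hcylV K' fun p hp => ?_
    have hp1 : p.1 ∈ N' := by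
      simp only [hN', Finset.mem_union]
      exact Or.inl (Or.inl (Or.inl (Finset.mem_image_of_mem Prod.fst hp)))
    have hp2 : p.2 ∈ N' := by
      simp only [hN', Finset.mem_union]
      exact Or.inl (Or.inl (Or.inr (Finset.mem_image_of_mem Prod.snd hp)))
    have hp3 : G'.1 p ∈ N' := by
      simp only [hN', Finset.mem_union]
      exact Or.inl (Or.inr (Finset.mem_image_of_mem G'.1 hp))
    show e'.symm (e' p.1 * e' p.2) = G'.1 p
    rw [he' p.1 hp1, he' p.2 hp2]
    have : g₂ p.1 * g₂ p.2 = g₂ (G'.1 p) := by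
      show ((1 : Carrier G) * 1, toC G' p.1 * toC G' p.2) = (1, toC G' (G'.1 p))
      rw [one_mul]
      exact congrArg (fun z => ((1 : Carrier G), z)) rfl
    rw [this, ← he' _ hp3, Equiv.symm_apply_apply]
  set σ : Equiv.Perm ℕ := e.trans e'.symm with hσdef
  have hσ0 : σ 0 = 0 := by
    show e'.symm (e 0) = 0
    rw [he0, ← he'0, Equiv.symm_apply_apply]
  have hact : (actHomeo σ hσ0) K = K' := by
    apply Subtype.ext
    show actm σ (mOf e) = mOf e'
    funext p
    show σ (e.symm (e (σ.symm p.1) * e (σ.symm p.2))) = e'.symm (e' p.1 * e' p.2)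
    have hsymm : ∀ n, e (σ.symm n) = e' n := fun n => by
      show e ((e.trans e'.symm).symm n) = e' n
      rw [Equiv.symm_trans_apply, Equiv.symm_symm, Equiv.apply_symm_apply]
    rw [hsymm, hsymm]
    show e'.symm (e (e.symm (e' p.1 * e' p.2))) = e'.symm (e' p.1 * e' p.2)
    rw [Equiv.apply_symm_apply]
  exact ⟨σ, hσ0, (actHomeo σ hσ0) K, ⟨K, hKU, rfl⟩, hact ▸ hK'V⟩

lemma measurableSet_groupTables [MeasurableSpace (ℕ × ℕ → ℕ)] [BorelSpace (ℕ × ℕ → ℕ)] :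
    MeasurableSet GroupTables := by
  have c1 : ∀ p : ℕ × ℕ, Continuous (fun m : ℕ × ℕ → ℕ => m p) := fun p => continuous_apply p
  have heq : GroupTables =
      (⋂ a, ⋂ b, ⋂ c, {m : ℕ × ℕ → ℕ | m (m (a, b), c) = m (a, m (b, c))}) ∩
      ((⋂ a, {m : ℕ × ℕ → ℕ | m (a, 0) = a}) ∩ ((⋂ a, {m : ℕ × ℕ → ℕ | m (0, a) = a}) ∩
      (⋂ a, ⋃ b, ({m : ℕ × ℕ → ℕ | m (a, b) = 0} ∩ {m : ℕ × ℕ → ℕ | m (b, a) = 0})))) := by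
    ext m
    simp only [GroupTables, Set.mem_setOf_eq, Set.mem_inter_iff, Set.mem_iInter, Set.mem_iUnion]
  rw [heq]
  refine MeasurableSet.inter ?_ (MeasurableSet.inter ?_ (MeasurableSet.inter ?_ ?_))
  · refine MeasurableSet.iInter fun a => MeasurableSet.iInter fun b =>
      MeasurableSet.iInter fun c => ?_
    exact (isClosed_nested2 (α := ℕ × ℕ → ℕ) (fun m => m (a, b)) (fun m => m (b, c))
      (fun m u => m (u, c)) (fun m v => m (a, v)) (c1 _) (c1 _)
      (fun u => c1 _) (fun v => c1 _)).measurableSet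
  · exact MeasurableSet.iInter fun a => (isClosed_eq (c1 _) continuous_const).measurableSet
  · exact MeasurableSet.iInter fun a => (isClosed_eq (c1 _) continuous_const).measurableSet
  · refine MeasurableSet.iInter fun a => MeasurableSet.iUnion fun b => ?_
    exact ((isClosed_eq (c1 _) continuous_const).measurableSet).inter
      ((isClosed_eq (c1 _) continuous_const).measurableSet)

theorem analyticSet_embeddable (H : Type*) [Group H] [Countable H] :
    AnalyticSet {G : ↥GroupTables | ∃ f : H →* Carrier G, Function.Injective f} := by
  classical
  borelize ((ℕ × ℕ → ℕ) × (H → ℕ))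
  set T : Set ((ℕ × ℕ → ℕ) × (H → ℕ)) :=
    {q | q.1 ∈ GroupTables ∧ (∀ x y : H, q.2 (x * y) = q.1 (q.2 x, q.2 y)) ∧
      Function.Injective q.2} with hT
  have c1 : ∀ p : ℕ × ℕ, Continuous (fun q : (ℕ × ℕ → ℕ) × (H → ℕ) => q.1 p) :=
    fun p => (continuous_apply p).comp continuous_fst
  have c2 : ∀ x : H, Continuous (fun q : (ℕ × ℕ → ℕ) × (H → ℕ) => q.2 x) :=
    fun x => (continuous_apply x).comp continuous_snd
  have hTm : MeasurableSet T := by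
    have h1 : MeasurableSet {q : (ℕ × ℕ → ℕ) × (H → ℕ) | q.1 ∈ GroupTables} := by
      borelize (ℕ × ℕ → ℕ)
      exact continuous_fst.measurable measurableSet_groupTables
    have h2 : MeasurableSet {q : (ℕ × ℕ → ℕ) × (H → ℕ) |
        ∀ x y : H, q.2 (x * y) = q.1 (q.2 x, q.2 y)} := by
      have : {q : (ℕ × ℕ → ℕ) × (H → ℕ) | ∀ x y : H, q.2 (x * y) = q.1 (q.2 x, q.2 y)} =
          ⋂ x, ⋂ y, {q : (ℕ × ℕ → ℕ) × (H → ℕ) | q.2 (x * y) = q.1 (q.2 x, q.2 y)} := by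
        ext q; simp [Set.mem_iInter]
      rw [this]
      refine MeasurableSet.iInter fun x => MeasurableSet.iInter fun y => ?_
      exact (isClosed_nested2' (α := (ℕ × ℕ → ℕ) × (H → ℕ)) (fun q => q.2 x) (fun q => q.2 y) (fun q => q.2 (x * y))
        (fun q u v => q.1 (u, v)) (c2 _) (c2 _) (c2 _) (fun u v => c1 _)).measurableSet
    have h3 : MeasurableSet {q : (ℕ × ℕ → ℕ) × (H → ℕ) | Function.Injective q.2} := by
      have : {q : (ℕ × ℕ → ℕ) × (H → ℕ) | Function.Injective q.2} =
          ⋂ x, ⋂ y, {q : (ℕ × ℕ → ℕ) × (H → ℕ) | q.2 x = q.2 y → x = y} := by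
        ext q
        simp only [Set.mem_setOf_eq, Set.mem_iInter, Function.Injective]
      rw [this]
      refine MeasurableSet.iInter fun x => MeasurableSet.iInter fun y => ?_
      by_cases hxy : x = y
      · have : {q : (ℕ × ℕ → ℕ) × (H → ℕ) | q.2 x = q.2 y → x = y} = Set.univ :=
          Set.eq_univ_of_forall fun q _ => hxy
        rw [this]; exact MeasurableSet.univ
      · have : {q : (ℕ × ℕ → ℕ) × (H → ℕ) | q.2 x = q.2 y → x = y} =
            {q : (ℕ × ℕ → ℕ) × (H → ℕ) | q.2 x = q.2 y}ᶜ := by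
          ext q
          simp only [Set.mem_setOf_eq, Set.mem_compl_iff]
          exact ⟨fun h hq => hxy (h hq), fun h hq => absurd hq h⟩
        rw [this]
        exact (isClosed_eq (c2 _) (c2 _)).measurableSet.compl
    exact h1.inter (h2.inter h3)
  have hTa : AnalyticSet T := hTm.analyticSet
  have hproj : AnalyticSet (Prod.fst '' T) := hTa.image_of_continuous continuous_fst
  obtain ⟨γ, tγ, pγ, g, hgc, hgr⟩ := analyticSet_iff_exists_polishSpace_range.1 hproj
  have hsub : ∀ z : γ, g z ∈ GroupTables := by
    intro z
    have : g z ∈ Prod.fst '' T := hgr ▸ Set.mem_range_self z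
    obtain ⟨q, hq, hqe⟩ := this
    exact hqe ▸ hq.1
  let g' : γ → ↥GroupTables := fun z => ⟨g z, hsub z⟩
  have hg'c : Continuous g' := Continuous.subtype_mk hgc _
  have hrange : Set.range g' = {G : ↥GroupTables | ∃ f : H →* Carrier G, Function.Injective f} := by
    ext G
    constructor
    · rintro ⟨z, rfl⟩
      have : g z ∈ Prod.fst '' T := hgr ▸ Set.mem_range_self z
      obtain ⟨q, hq, hqe⟩ := this
      refine ⟨MonoidHom.mk' (fun x => toC (g' z) (q.2 x)) ?_, ?_⟩
      · intro x y
        show toC (g' z) (q.2 (x * y)) = toC (g' z) ((g' z).1 (q.2 x, q.2 y))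
        rw [hq.2.1 x y, hqe]
      · intro x y h
        exact hq.2.2 h
    · rintro ⟨f, hf⟩
      have hqT : (G.1, fun x => fromC G (f x)) ∈ T := by
        refine ⟨G.2, fun x y => ?_, fun x y h => hf h⟩
        show fromC G (f (x * y)) = G.1 (fromC G (f x), fromC G (f y))
        rw [map_mul]
        rfl
      have : G.1 ∈ Prod.fst '' T := ⟨_, hqT, rfl⟩
      rw [← hgr] at this
      obtain ⟨z, hz⟩ := this
      exact ⟨z, Subtype.ext hz⟩
  rw [← hrange]
  exact analyticSet_iff_exists_polishSpace_range.2 ⟨γ, tγ, pγ, g', hg'c, rfl⟩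


lemma polishSpace_baireSpace (X : Type*) [TopologicalSpace X] [PolishSpace X] : BaireSpace X := by
  letI := TopologicalSpace.upgradeIsCompletelyMetrizable X
  infer_instance

instance : BaireSpace ↥GroupTables := polishSpace_baireSpace _

open MeasureTheory in
/-- For every countable group `H`, the embeddability set
`E_H = {G ∈ 𝒢 : H embeds into Ḡ}` is analytic; consequently it is either meager
or comeager in `𝒢`. -/
theorem embeddability_analytic_and_meager_or_comeager (H : Type*) [Group H] [Countable H] :
    AnalyticSet {G : ↥GroupTables | ∃ f : H →* Carrier G, Function.Injective f} ∧
      (IsMeagre {G : ↥GroupTables | ∃ f : H →* Carrier G, Function.Injective f} ∨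
        {G : ↥GroupTables | ∃ f : H →* Carrier G, Function.Injective f} ∈
          residual ↥GroupTables) := by
  refine ⟨analyticSet_embeddable H, ?_⟩
  set S := {G : ↥GroupTables | ∃ f : H →* Carrier G, Function.Injective f} with hSdef
  by_contra hcon
  push_neg at hcon
  obtain ⟨hnm, hnr⟩ := hcon
  have hSc : ¬ IsMeagre Sᶜ := fun h => hnr (by rwa [IsMeagre, compl_compl] at h)
  have hBM := analyticSet_baireMeasurableSet (analyticSet_embeddable H)
  obtain ⟨U, hUo, hUe⟩ := hBM.residualEq_isOpen
  obtain ⟨V, hVo, hVe⟩ := BaireMeasurableSet.residualEq_isOpen hBM.compl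
  have hUS : IsMeagre (U \ S) := diff_meagre_of_eventuallyEq hUe.symm
  have hSU : IsMeagre (S \ U) := diff_meagre_of_eventuallyEq hUe
  have hVS : IsMeagre (V \ Sᶜ) := diff_meagre_of_eventuallyEq hVe.symm
  have hScV : IsMeagre (Sᶜ \ V) := diff_meagre_of_eventuallyEq hVe
  have hUne : U.Nonempty := by
    rcases Set.eq_empty_or_nonempty U with rfl | h
    · exact absurd (hSU.mono (by simp)) hnm
    · exact h
  have hVne : V.Nonempty := by
    rcases Set.eq_empty_or_nonempty V with rfl | h
    · exact absurd (hScV.mono (by simp)) hSc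
    · exact h
  obtain ⟨σ, hσ, x, hxU, hxV⟩ := transitive_action hUo hVo hUne hVne
  set O := ((actHomeo σ hσ) '' U) ∩ V with hOdef
  have hOo : IsOpen O := ((actHomeo σ hσ).isOpenMap U hUo).inter hVo
  have hOne : O.Nonempty := ⟨x, hxU, hxV⟩
  have himg : IsMeagre ((actHomeo σ hσ) '' (U \ S)) := by
    rw [← Homeomorph.preimage_symm]
    exact hUS.preimage_of_isOpenMap (actHomeo σ hσ).symm.continuous
      (actHomeo σ hσ).symm.isOpenMap
  have hinv : ∀ G : ↥GroupTables, G ∈ S → (actHomeo σ hσ) G ∈ S := fun G hG => mem_S_act hσ hG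
  have hOS : O \ S ⊆ (actHomeo σ hσ) '' (U \ S) := by
    rintro y ⟨⟨⟨G, hGU, rfl⟩, hyV⟩, hyS⟩
    exact ⟨G, ⟨hGU, fun hGS => hyS (hinv G hGS)⟩, rfl⟩
  have hO1 : IsMeagre (O \ S) := himg.mono hOS
  have hO2 : IsMeagre (O ∩ S) := hVS.mono (by exact fun y hy => ⟨hy.1.2, fun h => h hy.2⟩)
  have hOm : IsMeagre O := (isMeagre_union' hO1 hO2).mono fun y hy => by
    by_cases h : y ∈ S
    · exact Or.inr ⟨hy, h⟩
    · exact Or.inl ⟨hy, h⟩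
  exact not_isMeagre_of_isOpen hOo hOne hOm
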